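/- For every pair of graphs (H,J) such that the complement of H and the graph J are both complete multipartite graphs, there exists an integer k > 0 such that every {H,J}-free graph is {K_k, S_k}-split, where K_k is the complete graph on k vertices and S_k is its complement (the edgeless graph on k vertices). -/

import Mathlib

/-- A graph `G` contains a graph `H` if some induced subgraph of `G` is isomorphic to `H`. -/
def Contains {α β : Type} (G : SimpleGraph α) (H : SimpleGraph β) : Prop :=
  ∃ s : Set α, Nonempty ((G.induce s) ≃g H)

/-- `G` is `H`-free if `G` does not contain `H`. -/
def Free {α β : Type} (G : SimpleGraph α) (H : SimpleGraph β) : Prop := ¬ Contains G H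

/-- `G` is `{H₁,H₂}`-split if `V(G) = X₁ ∪ X₂` where `G|Xᵢ` is `Hᵢ`-free for `i = 1,2`. -/
def Split {γ α β : Type} (G : SimpleGraph γ) (H₁ : SimpleGraph α) (H₂ : SimpleGraph β) : Prop :=
  ∃ X₁ X₂ : Set γ, X₁ ∪ X₂ = Set.univ ∧ Free (G.induce X₁) H₁ ∧ Free (G.induce X₂) H₂

/-- A complete multipartite graph: the vertex set is partitioned into stable sets
(fibres of `f`) that are pairwise complete to each other. -/
def IsCompleteMultipartite {α : Type} (G : SimpleGraph α) : Prop :=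
  ∃ (ι : Type) (f : α → ι), ∀ u v, G.Adj u v ↔ f u ≠ f v

noncomputable section NearSplitAux
open Classical

def rbAux (c : ℕ) : ℕ → ℕ
  | 0 => 0
  | m + 1 => c * rbAux c m + 1

theorem rbAux_seq {κ : Type} [Fintype κ] [Nonempty κ] (m : ℕ) :
    ∀ (Sg : Finset ℕ) (col : ℕ → ℕ → κ), rbAux (Fintype.card κ) m ≤ Sg.card →
    ∃ T, T ⊆ Sg ∧ T.card = m ∧ ∃ a : ℕ → κ, ∀ i ∈ T, ∀ j ∈ T, i < j → col i j = a i := by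
  induction m with
  | zero =>
      intro Sg col _
      exact ⟨∅, Finset.empty_subset _, Finset.card_empty,
        fun _ => Classical.arbitrary κ, by simp⟩
  | succ m ih =>
      intro Sg col hcard
      have hc : 0 < Fintype.card κ := Fintype.card_pos
      have hrb : rbAux (Fintype.card κ) (m+1) = Fintype.card κ * rbAux (Fintype.card κ) m + 1 := rfl
      have hne : Sg.Nonempty := by
        rw [← Finset.card_pos]; omega
      set v := Sg.min' hne with hv
      have hvmem : v ∈ Sg := Sg.min'_mem hne
      set Sg' := Sg.erase v with hSg'
      have hSg'card : Fintype.card κ * rbAux (Fintype.card κ) m ≤ Sg'.card := by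
        rw [hSg', Finset.card_erase_of_mem hvmem]
        omega
      have hclass : ∃ χ : κ, rbAux (Fintype.card κ) m ≤ (Sg'.filter (fun j => col v j = χ)).card := by
        by_contra h
        push_neg at h
        have hsum : Sg'.card = ∑ χ ∈ (Finset.univ : Finset κ),
            (Sg'.filter (fun j => col v j = χ)).card :=
          Finset.card_eq_sum_card_fiberwise (fun x _ => Finset.mem_univ _)
        have hlt : ∑ χ ∈ (Finset.univ : Finset κ), (Sg'.filter (fun j => col v j = χ)).card
            < ∑ _χ ∈ (Finset.univ : Finset κ), rbAux (Fintype.card κ) m :=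
          Finset.sum_lt_sum_of_nonempty Finset.univ_nonempty (fun χ _ => h χ)
        rw [Finset.sum_const, Finset.card_univ, smul_eq_mul] at hlt
        omega
      obtain ⟨χ, hχ⟩ := hclass
      obtain ⟨T', hT'sub, hT'card, a', ha'⟩ := ih (Sg'.filter (fun j => col v j = χ)) col hχ
      refine ⟨insert v T', ?_, ?_, fun i => if i = v then χ else a' i, ?_⟩
      · intro x hx
        rcases Finset.mem_insert.mp hx with rfl | hx
        · exact hvmem
        · exact Finset.mem_of_mem_erase (Finset.mem_of_mem_filter x (hT'sub hx))
      · have hvT' : v ∉ T' := by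
          intro hmem
          exact (Finset.notMem_erase v Sg) (Finset.mem_of_mem_filter v (hT'sub hmem))
        rw [Finset.card_insert_of_notMem hvT', hT'card]
      · intro i hi j hj hij
        have hjmem : ∀ x ∈ T', v < x := by
          intro x hx
          have hx' : x ∈ Sg.erase v := Finset.mem_of_mem_filter x (hT'sub hx)
          have h1 : x ≠ v := Finset.ne_of_mem_erase hx'
          have h2 : v ≤ x := Sg.min'_le x (Finset.mem_of_mem_erase hx')
          omega
        rcases Finset.mem_insert.mp hi with rfl | hi'
        · have hj' : j ∈ T' := by
            rcases Finset.mem_insert.mp hj with rfl | hj'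
            · omega
            · exact hj'
          have hcol : col v j = χ := by
            have := hT'sub hj'
            simp only [Finset.mem_filter] at this
            exact this.2
          simp [hcol]
        · have hij2 : i ≠ v := by
            have := hjmem i hi'
            omega
          have hj' : j ∈ T' := by
            rcases Finset.mem_insert.mp hj with rfl | hj'
            · have := hjmem i hi'; omega
            · exact hj'
          have := ha' i hi' j hj' hij
          simp [hij2, this]

theorem ramseyN {κ : Type} [Fintype κ] [Nonempty κ] (t : ℕ) (Sg : Finset ℕ) (col : ℕ → ℕ → κ)
    (h : rbAux (Fintype.card κ) (Fintype.card κ * t + 1) ≤ Sg.card) :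
    ∃ T, T ⊆ Sg ∧ T.card = t ∧ ∃ χ : κ, ∀ i ∈ T, ∀ j ∈ T, i < j → col i j = χ := by
  obtain ⟨T₀, hT₀sub, hT₀card, a, ha⟩ := rbAux_seq (Fintype.card κ * t + 1) Sg col h
  have hc : 0 < Fintype.card κ := Fintype.card_pos
  have hχ : ∃ χ : κ, t ≤ (T₀.filter (fun i => a i = χ)).card := by
    by_contra hcon
    push_neg at hcon
    have hsum : T₀.card = ∑ χ ∈ (Finset.univ : Finset κ), (T₀.filter (fun i => a i = χ)).card :=
      Finset.card_eq_sum_card_fiberwise (fun x _ => Finset.mem_univ _)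
    have hlt : ∑ χ ∈ (Finset.univ : Finset κ), (T₀.filter (fun i => a i = χ)).card
        < ∑ _χ ∈ (Finset.univ : Finset κ), t :=
      Finset.sum_lt_sum_of_nonempty Finset.univ_nonempty (fun χ _ => hcon χ)
    rw [Finset.sum_const, Finset.card_univ, smul_eq_mul] at hlt
    omega
  obtain ⟨χ, hχ⟩ := hχ
  obtain ⟨T, hTsub, hTcard⟩ := Finset.exists_subset_card_eq hχ
  refine ⟨T, fun x hx => hT₀sub (Finset.mem_of_mem_filter x (hTsub hx)), hTcard, χ, ?_⟩
  intro i hi j hj hij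
  have hi' := hTsub hi
  have hj' := hTsub hj
  simp only [Finset.mem_filter] at hi' hj'
  rw [ha i hi'.1 j hj'.1 hij, hi'.2]


def QQa (a b : ℕ) : ℕ := rbAux 4 (4 * (a + b) + 1) + 1
def kkA (a b : ℕ) : ℕ := QQa a b + 1
def nnP (a b : ℕ) : ℕ := kkA a b + a + b * b + 2
def ccA (a b : ℕ) : ℕ := Fintype.card (Fin (QQa a b) → Fin (QQa a b) → Bool)
def nnA (a b : ℕ) : ℕ := rbAux (ccA a b) (ccA a b * nnP a b + 1)
def kkB (a b : ℕ) : ℕ := nnA a b * kkA a b + kkA a b + 1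

theorem coreSplit {γ : Type} [Fintype γ] (G : SimpleGraph γ) (a b : ℕ) (ha : 1 ≤ a) (hb : 1 ≤ b)
    (hH : ¬ ∃ U : Fin a → Fin a → γ, (∀ i x j y, U i x = U j y → i = j ∧ x = y) ∧
      (∀ i x j y, G.Adj (U i x) (U j y) ↔ (i = j ∧ x ≠ y)))
    (hJ : ¬ ∃ U : Fin b → Fin b → γ, (∀ i x j y, U i x = U j y → i = j ∧ x = y) ∧
      (∀ i x j y, G.Adj (U i x) (U j y) ↔ i ≠ j)) :
    ∃ A : Finset γ,
      (¬ ∃ T : Finset γ, T ⊆ A ∧ T.card = kkA a b ∧ ∀ x ∈ T, ∀ y ∈ T, x ≠ y → G.Adj x y) ∧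
      (¬ ∃ T : Finset γ, (∀ x ∈ T, x ∉ A) ∧ T.card = kkB a b ∧
        ∀ x ∈ T, ∀ y ∈ T, x ≠ y → ¬ G.Adj x y) := by
  classical
  set Q := QQa a b with hQdef
  set k := kkA a b with hkdef
  set n' := nnP a b with hn'def
  set n := nnA a b with hndef
  set k' := kkB a b with hk'def
  have hQ0 : 0 < Q := by rw [hQdef]; unfold QQa; omega
  have hkQ : k = Q + 1 := rfl
  have hn'eq : n' = k + a + b * b + 2 := rfl
  have hk'eq : k' = n * k + k + 1 := rfl
  -- maximum K_k-free set
  set P : Finset γ → Prop :=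
    fun A => ¬ ∃ T : Finset γ, T ⊆ A ∧ T.card = k ∧ ∀ x ∈ T, ∀ y ∈ T, x ≠ y → G.Adj x y
    with hPdef
  have hP0 : P ∅ := by
    rintro ⟨T, hT, hc, -⟩
    rw [Finset.subset_empty.mp hT] at hc
    simp at hc
    omega
  obtain ⟨A, hPA, hAmax⟩ : ∃ A, P A ∧ ∀ A', P A' → A'.card ≤ A.card := by
    obtain ⟨A, hmem, hmax⟩ := Finset.exists_max_image (Finset.univ.filter P) Finset.card
      ⟨∅, Finset.mem_filter.mpr ⟨Finset.mem_univ _, hP0⟩⟩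
    exact ⟨A, (Finset.mem_filter.mp hmem).2,
      fun A' hA' => hmax A' (Finset.mem_filter.mpr ⟨Finset.mem_univ _, hA'⟩)⟩
  refine ⟨A, hPA, ?_⟩
  rintro ⟨S, hSB, hScard, hSstable⟩
  -- witnesses
  have hwit : ∀ v ∈ S, ∃ T : Finset γ, T ⊆ insert v A ∧ v ∈ T ∧ T.card = k ∧
      (∀ x ∈ T, ∀ y ∈ T, x ≠ y → G.Adj x y) := by
    intro v hv
    have hvA : v ∉ A := hSB v hv
    by_contra hno
    have hPins : P (insert v A) := by
      rintro ⟨T, hT, hc, hcl⟩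
      by_cases hvT : v ∈ T
      · exact hno ⟨T, hT, hvT, hc, hcl⟩
      · refine hPA ⟨T, ?_, hc, hcl⟩
        intro x hx
        rcases Finset.mem_insert.mp (hT hx) with rfl | h
        · exact absurd hx hvT
        · exact h
    have h2 := hAmax _ hPins
    rw [Finset.card_insert_of_notMem hvA] at h2
    omega
  -- greedy disjoint witnesses
  have hgreedy : ∀ m, m ≤ n → ∃ (s : ℕ → γ) (W : ℕ → Finset γ),
      (∀ i, i < m → s i ∈ S) ∧
      (∀ i, i < m → ∀ j, j < m → i ≠ j → s i ≠ s j) ∧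
      (∀ i, i < m → W i ⊆ A ∧ (W i).card = k - 1 ∧ (∀ x ∈ W i, G.Adj (s i) x) ∧
        (∀ x ∈ W i, ∀ y ∈ W i, x ≠ y → G.Adj x y)) ∧
      (∀ i, i < m → ∀ j, j < m → i ≠ j → ∀ x, x ∈ W i → x ∉ W j) := by
    have hSne : S.Nonempty := by
      rw [← Finset.card_pos, hScard]
      omega
    obtain ⟨v₀, hv₀⟩ := hSne
    intro m
    induction m with
    | zero =>
        intro _
        exact ⟨fun _ => v₀, fun _ => ∅,
          fun i hi => absurd hi (Nat.not_lt_zero i),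
          fun i hi => absurd hi (Nat.not_lt_zero i),
          fun i hi => absurd hi (Nat.not_lt_zero i),
          fun i hi => absurd hi (Nat.not_lt_zero i)⟩
    | succ m ih =>
        intro hm
        obtain ⟨s, W, hs, hsinj, hW, hWdisj⟩ := ih (by omega)
        set Tun := (Finset.range m).biUnion W with hTundef
        set chosen := (Finset.range m).image s with hchosendef
        have hTunA : Tun ⊆ A := by
          intro x hx
          rw [hTundef] at hx
          simp only [Finset.mem_biUnion, Finset.mem_range] at hx
          obtain ⟨i, hi, hxi⟩ := hx
          exact (hW i hi).1 hxi
        have hTuncard : Tun.card ≤ m * (k - 1) := by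
          calc Tun.card ≤ ∑ i ∈ Finset.range m, (W i).card := Finset.card_biUnion_le
            _ ≤ ∑ _i ∈ Finset.range m, (k - 1) :=
                Finset.sum_le_sum (fun i hi => le_of_eq (hW i (Finset.mem_range.mp hi)).2.1)
            _ = m * (k - 1) := by rw [Finset.sum_const, Finset.card_range, smul_eq_mul]
        have hchosencard : chosen.card ≤ m :=
          le_trans Finset.card_image_le (le_of_eq (Finset.card_range m))
        have hWsubTun : ∀ i, i < m → W i ⊆ Tun := by
          intro i hi x hx
          rw [hTundef]
          simp only [Finset.mem_biUnion, Finset.mem_range]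
          exact ⟨i, hi, hx⟩
        have hkey : ∃ v, v ∈ S ∧ v ∉ chosen ∧ ∃ Wv : Finset γ, Wv ⊆ A \ Tun ∧
            Wv.card = k - 1 ∧ (∀ x ∈ Wv, G.Adj v x) ∧
            (∀ x ∈ Wv, ∀ y ∈ Wv, x ≠ y → G.Adj x y) := by
          by_contra hcon
          set S' := S \ chosen with hS'def
          have hS'sub : S' ⊆ S := Finset.sdiff_subset
          have hS'card : S.card ≤ S'.card + m := by
            have h1 : S.card ≤ S'.card + chosen.card := by
              rw [hS'def]
              exact Finset.card_le_card_sdiff_add_card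
            omega
          set Astar := (A \ Tun) ∪ S' with hAstardef
          have hdisj : Disjoint (A \ Tun) S' := by
            rw [Finset.disjoint_left]
            intro x hx hx'
            exact hSB x (hS'sub hx') (Finset.mem_sdiff.mp hx).1
          have hAstarcard : Astar.card = (A \ Tun).card + S'.card :=
            Finset.card_union_of_disjoint hdisj
          have hPAstar : P Astar := by
            rintro ⟨T, hTsub, hTcard, hTcl⟩
            by_cases hex : ∃ v, v ∈ T ∧ v ∈ S'
            · obtain ⟨v, hvT, hvS'⟩ := hex
              have hTAv : ∀ x ∈ T, x ≠ v → x ∈ A \ Tun := by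
                intro x hx hxv
                rcases Finset.mem_union.mp (hTsub hx) with h | h
                · exact h
                · exact absurd (hTcl x hx v hvT hxv)
                    (hSstable x (hS'sub h) v (hS'sub hvS') hxv)
              refine hcon ⟨v, hS'sub hvS', (Finset.mem_sdiff.mp hvS').2, T.erase v, ?_, ?_, ?_, ?_⟩
              · intro x hx
                exact hTAv x (Finset.mem_of_mem_erase hx) (Finset.ne_of_mem_erase hx)
              · rw [Finset.card_erase_of_mem hvT, hTcard]
              · intro x hx
                exact hTcl v hvT x (Finset.mem_of_mem_erase hx)
                  (Ne.symm (Finset.ne_of_mem_erase hx))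
              · intro x hx y hy hxy
                exact hTcl x (Finset.mem_of_mem_erase hx) y (Finset.mem_of_mem_erase hy) hxy
            · push_neg at hex
              refine hPA ⟨T, ?_, hTcard, hTcl⟩
              intro x hx
              rcases Finset.mem_union.mp (hTsub hx) with h | h
              · exact (Finset.mem_sdiff.mp h).1
              · exact absurd h (hex x hx)
          have hle := hAmax Astar hPAstar
          have h1 : (A \ Tun).card = A.card - Tun.card := Finset.card_sdiff_of_subset hTunA
          have h2 : Tun.card ≤ A.card := Finset.card_le_card hTunA
          have hmk : m * (k - 1) + m ≤ n * k := by
            have h3 : m * k ≤ n * k := Nat.mul_le_mul_right k (by omega)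
            have h5 : k - 1 + 1 = k := by omega
            have h4 : m * (k - 1) + m = m * k := by
              calc m * (k - 1) + m = m * ((k - 1) + 1) := by ring
                _ = m * k := by rw [h5]
            omega
          rw [hAstarcard] at hle
          omega
        obtain ⟨v, hvS, hvnc, Wv, hWvsub, hWvcard, hWvadj, hWvcl⟩ := hkey
        refine ⟨fun i => if i = m then v else s i, fun i => if i = m then Wv else W i,
          ?_, ?_, ?_, ?_⟩
        · intro i hi
          by_cases him : i = m
          · simp only [if_pos him]; exact hvS
          · simp only [if_neg him]; exact hs i (by omega)
        · intro i hi j hj hij hc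
          by_cases him : i = m
          · have hjm : j ≠ m := by omega
            have hjlt : j < m := by omega
            simp only [if_pos him, if_neg hjm] at hc
            apply hvnc
            rw [hc]
            exact Finset.mem_image_of_mem s (Finset.mem_range.mpr hjlt)
          · by_cases hjm : j = m
            · have hilt : i < m := by omega
              simp only [if_neg him, if_pos hjm] at hc
              apply hvnc
              rw [← hc]
              exact Finset.mem_image_of_mem s (Finset.mem_range.mpr hilt)
            · simp only [if_neg him, if_neg hjm] at hc
              exact hsinj i (by omega) j (by omega) hij hc
        · intro i hi
          by_cases him : i = m
          · simp only [if_pos him]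
            exact ⟨fun x hx => (Finset.mem_sdiff.mp (hWvsub hx)).1, hWvcard, hWvadj, hWvcl⟩
          · simp only [if_neg him]
            exact hW i (by omega)
        · intro i hi j hj hij x
          by_cases him : i = m
          · have hjm : j ≠ m := by omega
            simp only [if_pos him, if_neg hjm]
            intro hx hxj
            exact (Finset.mem_sdiff.mp (hWvsub hx)).2 (hWsubTun j (by omega) hxj)
          · by_cases hjm : j = m
            · simp only [if_neg him, if_pos hjm]
              intro hx hxv
              exact (Finset.mem_sdiff.mp (hWvsub hxv)).2 (hWsubTun i (by omega) hx)
            · simp only [if_neg him, if_neg hjm]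
              exact hWdisj i (by omega) j (by omega) hij x
  obtain ⟨s, W, hs, hsinj, hW, hWdisj⟩ := hgreedy n (le_refl n)
  clear hgreedy hwit
  -- sub-blocks D i of size Q-1
  have hDex : ∀ i : ℕ, ∃ D : Finset γ, i < n → (D ⊆ W i ∧ D.card = Q - 1) := by
    intro i
    by_cases hi : i < n
    · have hcard : Q - 1 ≤ (W i).card := by
        rw [(hW i hi).2.1]
        omega
      obtain ⟨D, hD1, hD2⟩ := Finset.exists_subset_card_eq hcard
      exact ⟨D, fun _ => ⟨hD1, hD2⟩⟩
    · exact ⟨∅, fun h => absurd h hi⟩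
  choose D hD using hDex
  -- the blocks
  set bβ : ℕ → Fin Q → γ := fun i x =>
    if hx : (x : ℕ) - 1 < (D i).card ∧ (x : ℕ) ≠ 0 then
      (((D i).equivFin.symm ⟨(x : ℕ) - 1, hx.1⟩ : ↥(D i)) : γ)
    else s i
    with hbβdef
  have hbval : ∀ (i : ℕ) (x : Fin Q) (hlt : (x : ℕ) - 1 < (D i).card), (x : ℕ) ≠ 0 →
      bβ i x = (((D i).equivFin.symm ⟨(x : ℕ) - 1, hlt⟩ : ↥(D i)) : γ) := by
    intro i x hlt hx
    simp only [hbβdef]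
    rw [dif_pos ⟨hlt, hx⟩]
  have hb0 : ∀ (i : ℕ) (x : Fin Q), (x : ℕ) = 0 → bβ i x = s i := by
    intro i x hx
    simp only [hbβdef]
    rw [dif_neg]
    rintro ⟨-, h2⟩
    exact h2 hx
  have hbD : ∀ i, i < n → ∀ x : Fin Q, (x : ℕ) ≠ 0 → bβ i x ∈ D i := by
    intro i hi x hx
    have hcard : (D i).card = Q - 1 := (hD i hi).2
    have hlt : (x : ℕ) - 1 < (D i).card := by
      have := x.isLt
      omega
    rw [hbval i x hlt hx]
    exact Finset.coe_mem _
  have hbA : ∀ i, i < n → ∀ x : Fin Q, (x : ℕ) ≠ 0 → bβ i x ∈ A := by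
    intro i hi x hx
    exact (hW i hi).1 ((hD i hi).1 (hbD i hi x hx))
  have hbinj : ∀ i, i < n → ∀ x y : Fin Q, bβ i x = bβ i y → x = y := by
    intro i hi x y hxy
    have hcard : (D i).card = Q - 1 := (hD i hi).2
    by_cases hx0 : (x : ℕ) = 0
    · by_cases hy0 : (y : ℕ) = 0
      · exact Fin.ext (by omega)
      · exfalso
        rw [hb0 i x hx0] at hxy
        have := hbD i hi y hy0
        rw [← hxy] at this
        exact hSB (s i) (hs i hi) ((hW i hi).1 ((hD i hi).1 this))
    · by_cases hy0 : (y : ℕ) = 0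
      · exfalso
        rw [hb0 i y hy0] at hxy
        have := hbD i hi x hx0
        rw [hxy] at this
        exact hSB (s i) (hs i hi) ((hW i hi).1 ((hD i hi).1 this))
      · have hltx : (x : ℕ) - 1 < (D i).card := by have := x.isLt; omega
        have hlty : (y : ℕ) - 1 < (D i).card := by have := y.isLt; omega
        rw [hbval i x hltx hx0, hbval i y hlty hy0] at hxy
        have h2 : ((D i).equivFin.symm ⟨(x : ℕ) - 1, hltx⟩) = ((D i).equivFin.symm ⟨(y : ℕ) - 1, hlty⟩) :=
          Subtype.ext hxy
        have h3 := (D i).equivFin.symm.injective h2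
        have h4 : (x : ℕ) - 1 = (y : ℕ) - 1 := congrArg Fin.val h3
        exact Fin.ext (by omega)
  have hbcross : ∀ i j, i < n → j < n → i ≠ j → ∀ x y : Fin Q, bβ i x ≠ bβ j y := by
    intro i j hi hj hij x y heq
    by_cases hx0 : (x : ℕ) = 0
    · by_cases hy0 : (y : ℕ) = 0
      · rw [hb0 i x hx0, hb0 j y hy0] at heq
        exact hsinj i hi j hj hij heq
      · rw [hb0 i x hx0] at heq
        have := hbD j hj y hy0
        rw [← heq] at this
        exact hSB (s i) (hs i hi) ((hW j hj).1 ((hD j hj).1 this))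
    · by_cases hy0 : (y : ℕ) = 0
      · rw [hb0 j y hy0] at heq
        have := hbD i hi x hx0
        rw [heq] at this
        exact hSB (s j) (hs j hj) ((hW i hi).1 ((hD i hi).1 this))
      · have h1 := hbD i hi x hx0
        have h2 := hbD j hj y hy0
        rw [heq] at h1
        exact hWdisj i hi j hj hij (bβ j y) ((hD i hi).1 h1) ((hD j hj).1 h2)
  have hbcl : ∀ i, i < n → ∀ x y : Fin Q, x ≠ y → G.Adj (bβ i x) (bβ i y) := by
    intro i hi x y hxy
    by_cases hx0 : (x : ℕ) = 0
    · by_cases hy0 : (y : ℕ) = 0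
      · exact absurd (Fin.ext (by omega)) hxy
      · rw [hb0 i x hx0]
        exact (hW i hi).2.2.1 _ ((hD i hi).1 (hbD i hi y hy0))
    · by_cases hy0 : (y : ℕ) = 0
      · rw [hb0 i y hy0]
        exact ((hW i hi).2.2.1 _ ((hD i hi).1 (hbD i hi x hx0))).symm
      · have hne : bβ i x ≠ bβ i y := fun hc => hxy (hbinj i hi x y hc)
        exact (hW i hi).2.2.2 _ ((hD i hi).1 (hbD i hi x hx0)) _
          ((hD i hi).1 (hbD i hi y hy0)) hne
  -- Ramsey over blocks
  set colB : ℕ → ℕ → (Fin Q → Fin Q → Bool) :=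
    fun i j => fun x y => if G.Adj (bβ i x) (bβ j y) then true else false with hcolBdef
  have hramB : rbAux (Fintype.card (Fin Q → Fin Q → Bool))
      (Fintype.card (Fin Q → Fin Q → Bool) * n' + 1) ≤ (Finset.range n).card := by
    rw [Finset.card_range]
    have : n = rbAux (ccA a b) (ccA a b * n' + 1) := rfl
    rw [this]
    have hcc : Fintype.card (Fin Q → Fin Q → Bool) = ccA a b := rfl
    rw [hcc]
  obtain ⟨T, hTsub, hTcard, M, hM⟩ := ramseyN n' (Finset.range n) colB hramB
  set τ : Fin n' → ℕ := fun u => T.orderEmbOfFin hTcard u with hτdef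
  have hτT : ∀ u, τ u ∈ T := fun u => Finset.orderEmbOfFin_mem T hTcard u
  have hτn : ∀ u, τ u < n := fun u => Finset.mem_range.mp (hTsub (hτT u))
  have hτmono : ∀ u v : Fin n', u < v → τ u < τ v :=
    fun u v huv => (T.orderEmbOfFin hTcard).strictMono huv
  have hτinj : ∀ u v : Fin n', τ u = τ v → u = v :=
    fun u v h => (T.orderEmbOfFin hTcard).injective h
  set Vf : Fin n' → Fin Q → γ := fun u x => bβ (τ u) x with hVfdef
  have hMadj : ∀ u v : Fin n', u < v → ∀ x y : Fin Q,
      (G.Adj (Vf u x) (Vf v y) ↔ M x y = true) := by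
    intro u v huv x y
    have hcol := hM (τ u) (hτT u) (τ v) (hτT v) (hτmono u v huv)
    have hfun := congrFun (congrFun hcol x) y
    simp only [hcolBdef] at hfun
    constructor
    · intro hA
      rw [← hfun, if_pos hA]
    · intro hMxy
      by_contra hA
      rw [← hfun, if_neg hA] at hMxy
      exact Bool.false_ne_true hMxy
  have hVfinj : ∀ (u v : Fin n') (x y : Fin Q), Vf u x = Vf v y → u = v ∧ x = y := by
    intro u v x y h
    by_cases huv : u = v
    · subst huv
      exact ⟨rfl, hbinj (τ u) (hτn u) x y h⟩
    · exact absurd h (hbcross (τ u) (τ v) (hτn u) (hτn v)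
        (fun hc => huv (hτinj u v hc)) x y)
  have hVfcl : ∀ (u : Fin n') (x y : Fin Q), x ≠ y → G.Adj (Vf u x) (Vf u y) :=
    fun u x y hxy => hbcl (τ u) (hτn u) x y hxy
  -- numeric facts
  have h2n' : 2 ≤ n' := by rw [hn'eq]; omega
  have hkn' : k ≤ n' := by rw [hn'eq]; omega
  have han' : a ≤ n' := by rw [hn'eq]; omega
  have hbbn' : b * b ≤ n' := by rw [hn'eq]; omega
  -- the diagonal of M vanishes
  have hdiag : ∀ x : Fin Q, M x x = false := by
    intro x
    by_cases hx0 : (x : ℕ) = 0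
    · by_contra hMx
      have hMx : M x x = true := by
        cases hxx : M x x
        · exact absurd hxx hMx
        · rfl
      have hu : (0 : ℕ) < n' := by omega
      have hv : (1 : ℕ) < n' := by omega
      set u : Fin n' := ⟨0, hu⟩
      set v : Fin n' := ⟨1, hv⟩
      have huv : u < v := by show (⟨0, hu⟩ : Fin n') < ⟨1, hv⟩; exact Fin.mk_lt_mk.mpr Nat.zero_lt_one
      have hadj := (hMadj u v huv x x).mpr hMx
      have e1 : Vf u x = s (τ u) := hb0 (τ u) x hx0
      have e2 : Vf v x = s (τ v) := hb0 (τ v) x hx0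
      rw [e1, e2] at hadj
      have hne : s (τ u) ≠ s (τ v) := hsinj (τ u) (hτn u) (τ v) (hτn v)
        (by have := hτmono u v huv; omega)
      exact hSstable _ (hs (τ u) (hτn u)) _ (hs (τ v) (hτn v)) hne hadj
    · by_contra hMx
      have hMx : M x x = true := by
        cases hxx : M x x
        · exact absurd hxx hMx
        · rfl
      have hinj : Function.Injective (fun u : Fin n' => Vf u x) := by
        intro u v huv
        exact (hVfinj u v x x huv).1
      set Tc := Finset.image (fun u : Fin n' => Vf u x) Finset.univ with hTcdef
      have hTccard : Tc.card = n' := by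
        rw [hTcdef, Finset.card_image_of_injective _ hinj, Finset.card_univ, Fintype.card_fin]
      have hTcA : Tc ⊆ A := by
        intro z hz
        rw [hTcdef] at hz
        simp only [Finset.mem_image] at hz
        obtain ⟨u, -, rfl⟩ := hz
        exact hbA (τ u) (hτn u) x hx0
      have hTccl : ∀ z ∈ Tc, ∀ w ∈ Tc, z ≠ w → G.Adj z w := by
        intro z hz w hw hzw
        rw [hTcdef] at hz hw
        simp only [Finset.mem_image] at hz hw
        obtain ⟨u, -, rfl⟩ := hz
        obtain ⟨v, -, rfl⟩ := hw
        have huv : u ≠ v := fun hc => hzw (by rw [hc])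
        rcases lt_or_gt_of_ne huv with h | h
        · exact (hMadj u v h x x).mpr hMx
        · exact ((hMadj v u h x x).mpr hMx).symm
      have hkTc : k ≤ Tc.card := by omega
      obtain ⟨T2, hT2sub, hT2card⟩ := Finset.exists_subset_card_eq hkTc
      exact hPA ⟨T2, fun z hz => hTcA (hT2sub hz), hT2card,
        fun z hz w hw hzw => hTccl z (hT2sub hz) w (hT2sub hw) hzw⟩
  -- Ramsey over positions
  set colP : ℕ → ℕ → Bool × Bool := fun x y =>
    if h : x < Q ∧ y < Q then (M ⟨x, h.1⟩ ⟨y, h.2⟩, M ⟨y, h.2⟩ ⟨x, h.1⟩) else (false, false)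
    with hcolPdef
  have hc4 : Fintype.card (Bool × Bool) = 4 := by simp
  have hramP : rbAux (Fintype.card (Bool × Bool)) (Fintype.card (Bool × Bool) * (a + b) + 1)
      ≤ (Finset.range Q).card := by
    rw [hc4, Finset.card_range]
    have hQe : Q = rbAux 4 (4 * (a + b) + 1) + 1 := rfl
    omega
  obtain ⟨Ps, hPssub, hPscard, bb, hPmono⟩ := ramseyN (a + b) (Finset.range Q) colP hramP
  have hPQ : ∀ x ∈ Ps, x < Q := fun x hx => Finset.mem_range.mp (hPssub hx)
  have hPM : ∀ x (hx : x ∈ Ps) y (hy : y ∈ Ps), x < y →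
      M ⟨x, hPQ x hx⟩ ⟨y, hPQ y hy⟩ = bb.1 ∧ M ⟨y, hPQ y hy⟩ ⟨x, hPQ x hx⟩ = bb.2 := by
    intro x hx y hy hxy
    have h := hPmono x hx y hy hxy
    simp only [hcolPdef] at h
    rw [dif_pos ⟨hPQ x hx, hPQ y hy⟩] at h
    exact ⟨congrArg Prod.fst h, congrArg Prod.snd h⟩
  -- helper for the J-side contradiction
  have hblt : ∀ p q r t : Fin b, (p : ℕ) < (q : ℕ) →
      (p : ℕ) * b + (r : ℕ) < (q : ℕ) * b + (t : ℕ) := by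
    intro p q r t hpq
    have h2 : ((p : ℕ) + 1) * b ≤ (q : ℕ) * b := Nat.mul_le_mul_right b (by omega)
    have h3 : ((p : ℕ) + 1) * b = (p : ℕ) * b + b := by ring
    have := r.isLt
    omega
  have hidxlt : ∀ u x : Fin b, (u : ℕ) * b + (x : ℕ) < n' := by
    intro u x
    have hu := u.isLt
    have hx := x.isLt
    have h2 : ((u : ℕ) + 1) * b ≤ b * b := Nat.mul_le_mul_right b (by omega)
    have h3 : ((u : ℕ) + 1) * b = (u : ℕ) * b + b := by ring
    omega
  have hJcase : ∀ pos : Fin b → Fin Q, Function.Injective pos →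
      (∀ u v : Fin b, u < v → M (pos u) (pos v) = true) → False := by
    intro pos hposinj hpos
    apply hJ
    set idx : Fin b → Fin b → Fin n' := fun u x => ⟨(u : ℕ) * b + (x : ℕ), hidxlt u x⟩
      with hidxdef
    have hidxinj : ∀ u x v y : Fin b, idx u x = idx v y → u = v ∧ x = y := by
      intro u x v y h
      have hval : (u : ℕ) * b + (x : ℕ) = (v : ℕ) * b + (y : ℕ) := congrArg Fin.val h
      rcases Nat.lt_trichotomy (u : ℕ) (v : ℕ) with h1 | h1 | h1
      · exact absurd hval (Nat.ne_of_lt (hblt u v x y h1))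
      · refine ⟨Fin.ext h1, Fin.ext ?_⟩
        rw [h1] at hval
        omega
      · exact absurd hval.symm (Nat.ne_of_lt (hblt v u y x h1))
    have hidxord : ∀ u x v y : Fin b, u < v → idx u x < idx v y := by
      intro u x v y huv
      rw [Fin.lt_def]
      exact hblt u v x y huv
    refine ⟨fun u x => Vf (idx u x) (pos u), ?_, ?_⟩
    · intro i x j y heq
      obtain ⟨h1, h2⟩ := hVfinj _ _ _ _ heq
      exact hidxinj i x j y h1
    · intro i x j y
      by_cases hij : i = j
      · subst hij
        constructor
        · intro hadj
          exfalso
          by_cases hxy : x = y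
          · subst hxy
            exact G.irrefl hadj
          · have hne : idx i x ≠ idx i y := by
              intro hc
              exact hxy (hidxinj i x i y hc).2
            rcases lt_or_gt_of_ne hne with h | h
            · have hMt := (hMadj _ _ h (pos i) (pos i)).mp hadj
              rw [hdiag (pos i)] at hMt
              exact Bool.false_ne_true hMt
            · have hMt := (hMadj _ _ h (pos i) (pos i)).mp hadj.symm
              rw [hdiag (pos i)] at hMt
              exact Bool.false_ne_true hMt
        · intro h
          exact absurd rfl h
      · constructor
        · intro _
          exact hij
        · intro _
          rcases lt_or_gt_of_ne hij with h | h
          · exact (hMadj _ _ (hidxord i x j y h) (pos i) (pos j)).mpr (hpos i j h)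
          · exact ((hMadj _ _ (hidxord j y i x h) (pos j) (pos i)).mpr (hpos j i h)).symm
  -- J-side positions
  have hbPs : b ≤ Ps.card := by rw [hPscard]; omega
  obtain ⟨P', hP'sub, hP'card⟩ := Finset.exists_subset_card_eq hbPs
  set σ := P'.orderEmbOfFin hP'card with hσdef
  have hσPs : ∀ u : Fin b, (σ u : ℕ) ∈ Ps :=
    fun u => hP'sub (Finset.orderEmbOfFin_mem P' hP'card u)
  have hσQ : ∀ u : Fin b, σ u < Q := fun u => hPQ _ (hσPs u)
  by_cases hb1 : bb.1 = true
  · -- forward J pattern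
    apply hJcase (fun u => ⟨σ u, hσQ u⟩)
    · intro u v huv
      have h1 : (σ u : ℕ) = σ v := congrArg Fin.val huv
      exact σ.injective h1
    · intro u v huv
      have hlt : σ u < σ v := σ.strictMono huv
      have hMv := (hPM (σ u) (hσPs u) (σ v) (hσPs v) hlt).1
      rw [hb1] at hMv
      exact hMv
  by_cases hb2 : bb.2 = true
  · -- reversed J pattern
    apply hJcase (fun u => ⟨σ u.rev, hσQ u.rev⟩)
    · intro u v huv
      have h1 : (σ u.rev : ℕ) = σ v.rev := congrArg Fin.val huv
      have h2 : u.rev = v.rev := σ.injective h1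
      have h3 := congrArg Fin.rev h2
      rwa [Fin.rev_rev, Fin.rev_rev] at h3
    · intro u v huv
      have hrv : v.rev < u.rev := Fin.rev_lt_rev.mpr huv
      have hlt : σ v.rev < σ u.rev := σ.strictMono hrv
      have hMv := (hPM (σ v.rev) (hσPs v.rev) (σ u.rev) (hσPs u.rev) hlt).2
      rw [hb2] at hMv
      exact hMv
  -- H case : both false
  have hb1f : bb.1 = false := Bool.eq_false_iff.mpr hb1
  have hb2f : bb.2 = false := Bool.eq_false_iff.mpr hb2
  have haPs : a ≤ Ps.card := by rw [hPscard]; omega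
  obtain ⟨Pa, hPasub, hPacard⟩ := Finset.exists_subset_card_eq haPs
  set σa := Pa.orderEmbOfFin hPacard with hσadef
  have hσaPs : ∀ u : Fin a, (σa u : ℕ) ∈ Ps :=
    fun u => hPasub (Finset.orderEmbOfFin_mem Pa hPacard u)
  have hσaQ : ∀ u : Fin a, σa u < Q := fun u => hPQ _ (hσaPs u)
  set posa : Fin a → Fin Q := fun x => ⟨σa x, hσaQ x⟩ with hposadef
  have hposainj : Function.Injective posa := by
    intro u v huv
    have h1 : (σa u : ℕ) = σa v := congrArg Fin.val huv
    exact σa.injective h1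
  have hnullP : ∀ x y : Fin a, x ≠ y → M (posa x) (posa y) = false := by
    intro x y hxy
    have hσne : (σa x : ℕ) ≠ (σa y : ℕ) := by
      intro hc
      exact hxy (σa.injective hc)
    rcases lt_or_gt_of_ne hσne with h | h
    · have hMv := (hPM (σa x) (hσaPs x) (σa y) (hσaPs y) h).1
      rw [hb1f] at hMv
      exact hMv
    · have hMv := (hPM (σa y) (hσaPs y) (σa x) (hσaPs x) h).2
      rw [hb2f] at hMv
      exact hMv
  apply hH
  refine ⟨fun i x => Vf (Fin.castLE han' i) (posa x), ?_, ?_⟩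
  · intro i x j y heq
    obtain ⟨h1, h2⟩ := hVfinj _ _ _ _ heq
    refine ⟨?_, hposainj h2⟩
    have h3 := congrArg Fin.val h1
    exact Fin.ext (by simpa using h3)
  · intro i x j y
    by_cases hij : i = j
    · subst hij
      constructor
      · intro hadj
        refine ⟨rfl, ?_⟩
        intro hxy
        subst hxy
        exact G.irrefl hadj
      · rintro ⟨-, hxy⟩
        apply hVfcl
        intro hc
        exact hxy (hposainj hc)
    · have hne : Fin.castLE han' i ≠ Fin.castLE han' j := by
        intro hc
        exact hij (Fin.ext (by simpa using congrArg Fin.val hc))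
      constructor
      · intro hadj
        exfalso
        by_cases hxy : x = y
        · subst hxy
          rcases lt_or_gt_of_ne hne with h | h
          · have hMt := (hMadj _ _ h (posa x) (posa x)).mp hadj
            rw [hdiag (posa x)] at hMt
            exact Bool.false_ne_true hMt
          · have hMt := (hMadj _ _ h (posa x) (posa x)).mp hadj.symm
            rw [hdiag (posa x)] at hMt
            exact Bool.false_ne_true hMt
        · rcases lt_or_gt_of_ne hne with h | h
          · have hMt := (hMadj _ _ h (posa x) (posa y)).mp hadj
            rw [hnullP x y hxy] at hMt
            exact Bool.false_ne_true hMt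
          · have hMt := (hMadj _ _ h (posa y) (posa x)).mp hadj.symm
            rw [hnullP y x (Ne.symm hxy)] at hMt
            exact Bool.false_ne_true hMt
      · rintro ⟨hij', -⟩
        exact absurd hij' hij


theorem exists_clique_of_contains_top {γ : Type} {G : SimpleGraph γ} {X : Set γ} {m : ℕ}
    (h : Contains (G.induce X) (⊤ : SimpleGraph (Fin m))) :
    ∃ T : Finset γ, ↑T ⊆ X ∧ T.card = m ∧ ∀ x ∈ T, ∀ y ∈ T, x ≠ y → G.Adj x y := by
  classical
  obtain ⟨s, ⟨φ⟩⟩ := h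
  let F : Fin m → γ := fun i => ((φ.symm i : ↥s) : ↥X)
  have hFinj : Function.Injective F := by
    intro i j hij
    have h2 : (φ.symm i : ↥s) = (φ.symm j : ↥s) := Subtype.ext (Subtype.ext hij)
    exact φ.symm.toEquiv.injective h2
  refine ⟨Finset.image F Finset.univ, ?_, ?_, ?_⟩
  · intro x hx
    simp only [Finset.coe_image, Set.mem_image] at hx
    obtain ⟨i, _, rfl⟩ := hx
    exact ((φ.symm i : ↥s) : ↥X).property
  · rw [Finset.card_image_of_injective _ hFinj, Finset.card_univ, Fintype.card_fin]
  · intro x hx y hy hxy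
    simp only [Finset.mem_image] at hx hy
    obtain ⟨i, _, rfl⟩ := hx
    obtain ⟨j, _, rfl⟩ := hy
    have hij : i ≠ j := fun hc => hxy (by rw [hc])
    have : ((G.induce X).induce s).Adj (φ.symm i) (φ.symm j) := by
      rw [SimpleGraph.Iso.map_adj_iff]
      exact SimpleGraph.top_adj i j |>.mpr hij
    exact this

theorem exists_stable_of_contains_bot {γ : Type} {G : SimpleGraph γ} {X : Set γ} {m : ℕ}
    (h : Contains (G.induce X) (⊥ : SimpleGraph (Fin m))) :
    ∃ T : Finset γ, ↑T ⊆ X ∧ T.card = m ∧ ∀ x ∈ T, ∀ y ∈ T, x ≠ y → ¬ G.Adj x y := by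
  classical
  obtain ⟨s, ⟨φ⟩⟩ := h
  let F : Fin m → γ := fun i => ((φ.symm i : ↥s) : ↥X)
  have hFinj : Function.Injective F := by
    intro i j hij
    have h2 : (φ.symm i : ↥s) = (φ.symm j : ↥s) := Subtype.ext (Subtype.ext hij)
    exact φ.symm.toEquiv.injective h2
  refine ⟨Finset.image F Finset.univ, ?_, ?_, ?_⟩
  · intro x hx
    simp only [Finset.coe_image, Set.mem_image] at hx
    obtain ⟨i, _, rfl⟩ := hx
    exact ((φ.symm i : ↥s) : ↥X).property
  · rw [Finset.card_image_of_injective _ hFinj, Finset.card_univ, Fintype.card_fin]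
  · intro x hx y hy hxy hadj
    simp only [Finset.mem_image] at hx hy
    obtain ⟨i, _, rfl⟩ := hx
    obtain ⟨j, _, rfl⟩ := hy
    have : ((G.induce X).induce s).Adj (φ.symm i) (φ.symm j) := by
      exact hadj
    rw [SimpleGraph.Iso.map_adj_iff] at this
    exact this

theorem contains_of_embedding {γ α : Type} (G : SimpleGraph γ) (H : SimpleGraph α)
    (e : α → γ) (inj : Function.Injective e)
    (hadj : ∀ u v, G.Adj (e u) (e v) ↔ H.Adj u v) : Contains G H := by
  refine ⟨Set.range e, ⟨⟨(Equiv.ofInjective e inj).symm, ?_⟩⟩⟩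
  intro a b
  show H.Adj _ _ ↔ (G.induce (Set.range e)).Adj a b
  rw [← hadj]
  rw [Equiv.apply_ofInjective_symm inj a, Equiv.apply_ofInjective_symm inj b]
  simp [SimpleGraph.comap_adj]

end NearSplitAux

/-- For every pair of graphs (H,J) such that `Hᶜ` and `J` are complete multipartite,
there exists an integer `k > 0` such that every `{H,J}`-free graph is `{K_k,S_k}`-split. -/
theorem stmt1 {α β : Type} [Fintype α] [Fintype β]
    (H : SimpleGraph α) (J : SimpleGraph β)
    (hH : IsCompleteMultipartite Hᶜ) (hJ : IsCompleteMultipartite J) :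
    ∃ k : ℕ, 0 < k ∧
      ∀ (γ : Type) [Fintype γ] (G : SimpleGraph γ), Free G H → Free G J →
        Split G (⊤ : SimpleGraph (Fin k)) (⊥ : SimpleGraph (Fin k)) := by
  classical
  obtain ⟨ι, f, hf⟩ := hH
  obtain ⟨ι₂, g, hg⟩ := hJ
  set a := Fintype.card α + 1 with hadef
  set b := Fintype.card β + 1 with hbdef
  have hkkA1 : 1 ≤ kkA a b := by unfold kkA; omega
  refine ⟨kkA a b + kkB a b, by omega, ?_⟩
  intro γ _ G hFH hFJ
  have hHadj : ∀ u v, H.Adj u v ↔ (u ≠ v ∧ f u = f v) := by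
    intro u v
    constructor
    · intro h
      refine ⟨H.ne_of_adj h, ?_⟩
      by_contra hfc
      have hcadj : Hᶜ.Adj u v := (hf u v).mpr hfc
      rw [SimpleGraph.compl_adj] at hcadj
      exact hcadj.2 h
    · rintro ⟨hne, hfe⟩
      by_contra hna
      have hcadj : Hᶜ.Adj u v := (SimpleGraph.compl_adj H u v).mpr ⟨hne, hna⟩
      exact (hf u v).mp hcadj hfe
  -- combinatorial pattern-freeness for the H side
  have hcoreH : ¬ ∃ U : Fin a → Fin a → γ, (∀ i x j y, U i x = U j y → i = j ∧ x = y) ∧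
      (∀ i x j y, G.Adj (U i x) (U j y) ↔ (i = j ∧ x ≠ y)) := by
    rintro ⟨U, hUinj, hUadj⟩
    apply hFH
    have hmemf : ∀ u : α, f u ∈ Finset.univ.image f :=
      fun u => Finset.mem_image_of_mem f (Finset.mem_univ u)
    have hia : (Finset.univ.image f).card ≤ a := by
      have h1 : (Finset.univ.image f).card ≤ (Finset.univ : Finset α).card :=
        Finset.card_image_le
      rw [Finset.card_univ] at h1
      omega
    have hca : Fintype.card α ≤ a := by omega
    set part : α → Fin a :=
      fun u => Fin.castLE hia ((Finset.univ.image f).equivFin ⟨f u, hmemf u⟩) with hpartdef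
    set posn : α → Fin a := fun u => Fin.castLE hca (Fintype.equivFin α u) with hposdef
    have hparteq : ∀ u v, part u = part v ↔ f u = f v := by
      intro u v
      constructor
      · intro h
        have h1 := congrArg Fin.val h
        simp only [hpartdef, Fin.coe_castLE] at h1
        have h2 := (Finset.univ.image f).equivFin.injective (Fin.ext h1)
        exact Subtype.mk_eq_mk.mp h2
      · intro h
        have h2 : (⟨f u, hmemf u⟩ : ↥(Finset.univ.image f)) = ⟨f v, hmemf v⟩ :=
          Subtype.ext h
        simp only [hpartdef]
        rw [h2]
    have hposinj : Function.Injective posn := by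
      intro u v h
      have h1 := congrArg Fin.val h
      simp only [hposdef, Fin.coe_castLE] at h1
      exact (Fintype.equivFin α).injective (Fin.ext h1)
    apply contains_of_embedding G H (fun u => U (part u) (posn u))
    · intro u v h
      obtain ⟨h1, h2⟩ := hUinj _ _ _ _ h
      exact hposinj h2
    · intro u v
      rw [hUadj, hHadj]
      constructor
      · rintro ⟨h1, h2⟩
        exact ⟨fun hc => h2 (by rw [hc]), (hparteq u v).mp h1⟩
      · rintro ⟨h1, h2⟩
        exact ⟨(hparteq u v).mpr h2, fun hc => h1 (hposinj hc)⟩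
  -- combinatorial pattern-freeness for the J side
  have hcoreJ : ¬ ∃ U : Fin b → Fin b → γ, (∀ i x j y, U i x = U j y → i = j ∧ x = y) ∧
      (∀ i x j y, G.Adj (U i x) (U j y) ↔ i ≠ j) := by
    rintro ⟨U, hUinj, hUadj⟩
    apply hFJ
    have hmemg : ∀ u : β, g u ∈ Finset.univ.image g :=
      fun u => Finset.mem_image_of_mem g (Finset.mem_univ u)
    have hib : (Finset.univ.image g).card ≤ b := by
      have h1 : (Finset.univ.image g).card ≤ (Finset.univ : Finset β).card :=
        Finset.card_image_le
      rw [Finset.card_univ] at h1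
      omega
    have hcb : Fintype.card β ≤ b := by omega
    set part : β → Fin b :=
      fun u => Fin.castLE hib ((Finset.univ.image g).equivFin ⟨g u, hmemg u⟩) with hpartdef
    set posn : β → Fin b := fun u => Fin.castLE hcb (Fintype.equivFin β u) with hposdef
    have hparteq : ∀ u v, part u = part v ↔ g u = g v := by
      intro u v
      constructor
      · intro h
        have h1 := congrArg Fin.val h
        simp only [hpartdef, Fin.coe_castLE] at h1
        have h2 := (Finset.univ.image g).equivFin.injective (Fin.ext h1)
        exact Subtype.mk_eq_mk.mp h2
      · intro h
        have h2 : (⟨g u, hmemg u⟩ : ↥(Finset.univ.image g)) = ⟨g v, hmemg v⟩ :=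
          Subtype.ext h
        simp only [hpartdef]
        rw [h2]
    have hposinj : Function.Injective posn := by
      intro u v h
      have h1 := congrArg Fin.val h
      simp only [hposdef, Fin.coe_castLE] at h1
      exact (Fintype.equivFin β).injective (Fin.ext h1)
    apply contains_of_embedding G J (fun u => U (part u) (posn u))
    · intro u v h
      obtain ⟨h1, h2⟩ := hUinj _ _ _ _ h
      exact hposinj h2
    · intro u v
      rw [hUadj, hg]
      exact not_congr (hparteq u v)
  obtain ⟨A, hA1, hA2⟩ := coreSplit G a b (by omega) (by omega) hcoreH hcoreJ
  refine ⟨↑A, ↑(Aᶜ), ?_, ?_, ?_⟩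
  · rw [Finset.coe_compl]
    exact Set.union_compl_self _
  · intro hcon
    obtain ⟨T, hTsub, hTcard, hTcl⟩ := exists_clique_of_contains_top hcon
    have hkk : kkA a b ≤ T.card := by rw [hTcard]; omega
    obtain ⟨T2, hT2sub, hT2card⟩ := Finset.exists_subset_card_eq hkk
    refine hA1 ⟨T2, ?_, hT2card, ?_⟩
    · intro x hx
      exact Finset.mem_coe.mp (hTsub (hT2sub hx))
    · intro x hx y hy hxy
      exact hTcl x (hT2sub hx) y (hT2sub hy) hxy
  · intro hcon
    obtain ⟨T, hTsub, hTcard, hTst⟩ := exists_stable_of_contains_bot hcon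
    have hkk : kkB a b ≤ T.card := by rw [hTcard]; omega
    obtain ⟨T2, hT2sub, hT2card⟩ := Finset.exists_subset_card_eq hkk
    refine hA2 ⟨T2, ?_, hT2card, ?_⟩
    · intro x hx
      have hx2 := hTsub (hT2sub hx)
      rw [Finset.coe_compl] at hx2
      exact fun hxA => hx2 (Finset.mem_coe.mpr hxA)
    · intro x hx y hy hxy
      exact hTst x (hT2sub hx) y (hT2sub hy) hxy
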